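/- Let ĝ ∈ ℝ^{m−1} be nonzero and define φ(y) = y₀ − ‖ŷ‖ for y = (y₀, ŷ) near a point g with ĝ ≠ 0. Then for directions d, with G(x) a twice differentiable map into ℝᵐ with g = G(x̄), ĝ = Ĝ(x̄), g₀ = ‖ĝ‖, and ⟨DG(x̄)d, R g⟩ = 0, the second derivative of φ ∘ G at x̄ in direction d satisfies ⟨D²(φ∘G)(x̄)d, d⟩ = (1/g₀)(⟨R·DG(x̄)d, DG(x̄)d⟩ + ⟨D²G(x̄)[d,d], R g⟩), where R = diag(1, −I_{m−1}). -/

import Mathlib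

open scoped RealInnerProductSpace

/-- The norm of the "hat part" `ŷ` of `y = (y₀, ŷ) ∈ ℝ × ℝ^{m-1}`. -/
noncomputable def hatNorm {m : ℕ} (z : EuclideanSpace ℝ (Fin m)) : ℝ :=
  Real.sqrt (∑ i : Fin m, if (i : ℕ) = 0 then 0 else z i ^ 2)

/-- The reflection matrix `R = diag(1, -I_{m-1})`, i.e. `R(z₀, ẑ) = (z₀, -ẑ)`. -/
def reflR (m : ℕ) [NeZero m] (z : EuclideanSpace ℝ (Fin m)) : EuclideanSpace ℝ (Fin m) :=
  WithLp.toLp 2 (fun i => if (i : ℕ) = 0 then z 0 else -z i)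

lemma coordFD {n m : ℕ} {G : EuclideanSpace ℝ (Fin n) → EuclideanSpace ℝ (Fin m)}
    (hG : ContDiff ℝ 2 G) (x : EuclideanSpace ℝ (Fin n)) (i : Fin m) :
    HasFDerivAt (fun y => G y i) ((EuclideanSpace.proj i).comp (fderiv ℝ G x)) x := by
  have hA : HasFDerivAt G (fderiv ℝ G x) x :=
    (hG.differentiable (by norm_num)).differentiableAt.hasFDerivAt
  exact (EuclideanSpace.proj (𝕜 := ℝ) i).hasFDerivAt.comp x hA

lemma hasFDerivAt_Q {n m : ℕ} {G : EuclideanSpace ℝ (Fin n) → EuclideanSpace ℝ (Fin m)}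
    (hG : ContDiff ℝ 2 G) (x : EuclideanSpace ℝ (Fin n)) :
    HasFDerivAt (fun y => ∑ i : Fin m, if (i : ℕ) = 0 then 0 else G y i ^ 2)
      (∑ i : Fin m, if (i : ℕ) = 0 then 0
        else (2 * G x i) • ((EuclideanSpace.proj i).comp (fderiv ℝ G x))) x := by
  apply HasFDerivAt.fun_sum
  intro i _
  by_cases h : (i : ℕ) = 0
  · simpa [h] using hasFDerivAt_const (0:ℝ) x
  · simpa [h, pow_two, two_mul, add_smul] using (coordFD hG x i).fun_mul (coordFD hG x i)

lemma aux1 {n m : ℕ} [NeZero m] {G : EuclideanSpace ℝ (Fin n) → EuclideanSpace ℝ (Fin m)}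
    (hG : ContDiff ℝ 2 G) (d x : EuclideanSpace ℝ (Fin n))
    (hx : 0 < ∑ i : Fin m, if (i : ℕ) = 0 then 0 else G x i ^ 2) :
    fderiv ℝ (fun y => G y 0 - hatNorm (G y)) x d =
      fderiv ℝ G x d 0 -
        (∑ i : Fin m, if (i : ℕ) = 0 then 0 else G x i * fderiv ℝ G x d i) *
          (Real.sqrt (∑ i : Fin m, if (i : ℕ) = 0 then 0 else G x i ^ 2))⁻¹ := by
  set Q : EuclideanSpace ℝ (Fin n) → ℝ :=
    fun y => ∑ i : Fin m, if (i : ℕ) = 0 then 0 else G y i ^ 2 with hQdef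
  have hsq : HasFDerivAt (fun y => Real.sqrt (Q y))
      ((1 / (2 * Real.sqrt (Q x))) • (∑ i : Fin m, if (i : ℕ) = 0 then 0
        else (2 * G x i) • ((EuclideanSpace.proj i).comp (fderiv ℝ G x)))) x :=
    (Real.hasDerivAt_sqrt hx.ne').comp_hasFDerivAt x (hasFDerivAt_Q hG x)
  have hf : HasFDerivAt (fun y => G y 0 - hatNorm (G y))
      (((EuclideanSpace.proj (0 : Fin m)).comp (fderiv ℝ G x)) -
        ((1 / (2 * Real.sqrt (Q x))) • (∑ i : Fin m, if (i : ℕ) = 0 then 0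
          else (2 * G x i) • ((EuclideanSpace.proj i).comp (fderiv ℝ G x))))) x := by
    simpa [hatNorm, hQdef] using (coordFD hG x 0).fun_sub hsq
  rw [hf.fderiv]
  have hs : Real.sqrt (Q x) ≠ 0 := (Real.sqrt_pos.mpr hx).ne'
  simp only [ContinuousLinearMap.sub_apply, ContinuousLinearMap.smul_apply,
    ContinuousLinearMap.sum_apply, ContinuousLinearMap.coe_comp', Function.comp_apply,
    PiLp.proj_apply, apply_ite (fun L : EuclideanSpace ℝ (Fin n) →L[ℝ] ℝ => L d),
    ContinuousLinearMap.zero_apply, smul_eq_mul]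
  have hsum : (∑ i : Fin m, if (i : ℕ) = 0 then 0 else 2 * G x i * fderiv ℝ G x d i)
      = 2 * ∑ i : Fin m, if (i : ℕ) = 0 then 0 else G x i * fderiv ℝ G x d i := by
    rw [Finset.mul_sum]; exact Finset.sum_congr rfl fun i _ => by split <;> ring
  rw [hsum]
  field_simp
  ring

/-- Second derivative of `φ ∘ G`, `φ(y) = y₀ - ‖ŷ‖`, at a point `x̄` with
`G(x̄) = g` a nonzero boundary point of the second-order cone (`g₀ = ‖ĝ‖ > 0`),
in a direction `d` with `⟨DG(x̄)d, Rg⟩ = 0`: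
`⟨D²(φ∘G)(x̄)d, d⟩ = (1/g₀)(⟨R·DG(x̄)d, DG(x̄)d⟩ + ⟨D²G(x̄)[d,d], Rg⟩)`. -/
theorem stmt12 (n m : ℕ) [NeZero m] (hm : 2 ≤ m)
    (G : EuclideanSpace ℝ (Fin n) → EuclideanSpace ℝ (Fin m))
    (hG : ContDiff ℝ 2 G) (x0 : EuclideanSpace ℝ (Fin n))
    (hbd : hatNorm (G x0) = G x0 0) (hg0 : 0 < G x0 0)
    (d : EuclideanSpace ℝ (Fin n))
    (horth : ⟪fderiv ℝ G x0 d, reflR m (G x0)⟫ = 0) :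
    fderiv ℝ (fun x => fderiv ℝ (fun y => G y 0 - hatNorm (G y)) x d) x0 d =
      (1 / G x0 0) *
        (⟪reflR m (fderiv ℝ G x0 d), fderiv ℝ G x0 d⟫ +
          ⟪fderiv ℝ (fderiv ℝ G) x0 d d, reflR m (G x0)⟫) := by
  set Q : EuclideanSpace ℝ (Fin n) → ℝ :=
    fun y => ∑ i : Fin m, if (i : ℕ) = 0 then 0 else G y i ^ 2 with hQdef
  have hQnn : 0 ≤ Q x0 := Finset.sum_nonneg fun i _ => by
    split
    · exact le_rfl
    · exact sq_nonneg _
  have hQval : Q x0 = (G x0 0) ^ 2 := by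
    have h1 : Real.sqrt (Q x0) = G x0 0 := hbd
    rw [← h1, Real.sq_sqrt hQnn]
  have hQpos : 0 < Q x0 := hQval ▸ pow_pos hg0 2
  have hsqrt : Real.sqrt (Q x0) = G x0 0 := hbd
  have hQc : Continuous Q := by
    apply continuous_finset_sum
    intro i _
    by_cases h : (i : ℕ) = 0
    · simp [h]; exact continuous_const
    · simp only [h, if_false]
      exact ((EuclideanSpace.proj (𝕜 := ℝ) i).continuous.comp hG.continuous).pow 2
  have hev : ∀ᶠ x in nhds x0, 0 < Q x :=
    (hQc.continuousAt).eventually (eventually_gt_nhds hQpos)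
  have hev2 : (fun x => fderiv ℝ (fun y => G y 0 - hatNorm (G y)) x d) =ᶠ[nhds x0]
      (fun x => fderiv ℝ G x d 0 -
        (∑ i : Fin m, if (i : ℕ) = 0 then 0 else G x i * fderiv ℝ G x d i) *
          (Real.sqrt (Q x))⁻¹) :=
    hev.mono fun x hx => aux1 hG d x hx
  rw [hev2.fderiv_eq]
  -- derivative building blocks at x0
  have hD2 : HasFDerivAt (fderiv ℝ G) (fderiv ℝ (fderiv ℝ G) x0) x0 := by
    have h1 : ContDiff ℝ 1 (fderiv ℝ G) := hG.fderiv_right (by norm_num)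
    exact (h1.differentiable (by norm_num)).differentiableAt.hasFDerivAt
  have hu : HasFDerivAt (fun x => fderiv ℝ G x d)
      ((fderiv ℝ G x0).comp (0 : EuclideanSpace ℝ (Fin n) →L[ℝ] EuclideanSpace ℝ (Fin n)) +
        (fderiv ℝ (fderiv ℝ G) x0).flip d) x0 := by
    simpa using hD2.clm_apply (hasFDerivAt_const d x0)
  set B : EuclideanSpace ℝ (Fin n) →L[ℝ] EuclideanSpace ℝ (Fin m) :=
    (fderiv ℝ G x0).comp (0 : EuclideanSpace ℝ (Fin n) →L[ℝ] EuclideanSpace ℝ (Fin n)) +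
      (fderiv ℝ (fderiv ℝ G) x0).flip d with hBdef
  have hucoord : ∀ i : Fin m, HasFDerivAt (fun x => fderiv ℝ G x d i)
      ((EuclideanSpace.proj i).comp B) x0 := fun i =>
    (EuclideanSpace.proj (𝕜 := ℝ) i).hasFDerivAt.comp x0 hu
  have hS : HasFDerivAt
      (fun x => ∑ i : Fin m, if (i : ℕ) = 0 then 0 else G x i * fderiv ℝ G x d i)
      (∑ i : Fin m, if (i : ℕ) = 0 then 0
        else (G x0 i) • ((EuclideanSpace.proj i).comp B) +
          (fderiv ℝ G x0 d i) • ((EuclideanSpace.proj i).comp (fderiv ℝ G x0))) x0 := by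
    apply HasFDerivAt.fun_sum
    intro i _
    by_cases h : (i : ℕ) = 0
    · simpa [h] using hasFDerivAt_const (0:ℝ) x0
    · simpa [h] using (coordFD hG x0 i).fun_mul (hucoord i)
  have hsne : Real.sqrt (Q x0) ≠ 0 := (Real.sqrt_pos.mpr hQpos).ne'
  have hinv : HasFDerivAt (fun x => (Real.sqrt (Q x))⁻¹)
      ((-(1 / (2 * Real.sqrt (Q x0))) / (Real.sqrt (Q x0)) ^ 2) •
        (∑ i : Fin m, if (i : ℕ) = 0 then 0
          else (2 * G x0 i) • ((EuclideanSpace.proj i).comp (fderiv ℝ G x0)))) x0 :=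
    ((Real.hasDerivAt_sqrt hQpos.ne').inv hsne).comp_hasFDerivAt x0 (hasFDerivAt_Q hG x0)
  have hF : HasFDerivAt
      (fun x => fderiv ℝ G x d 0 -
        (∑ i : Fin m, if (i : ℕ) = 0 then 0 else G x i * fderiv ℝ G x d i) *
          (Real.sqrt (Q x))⁻¹)
      (((EuclideanSpace.proj (0 : Fin m)).comp B) -
        ((∑ i : Fin m, if (i : ℕ) = 0 then 0 else G x0 i * fderiv ℝ G x0 d i) •
            ((-(1 / (2 * Real.sqrt (Q x0))) / (Real.sqrt (Q x0)) ^ 2) •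
              (∑ i : Fin m, if (i : ℕ) = 0 then 0
                else (2 * G x0 i) • ((EuclideanSpace.proj i).comp (fderiv ℝ G x0)))) +
          (Real.sqrt (Q x0))⁻¹ •
            (∑ i : Fin m, if (i : ℕ) = 0 then 0
              else (G x0 i) • ((EuclideanSpace.proj i).comp B) +
                (fderiv ℝ G x0 d i) • ((EuclideanSpace.proj i).comp (fderiv ℝ G x0))))) x0 :=
    (hucoord 0).sub (hS.mul hinv)
  rw [hF.fderiv]
  simp only [ContinuousLinearMap.sub_apply, ContinuousLinearMap.add_apply,
    ContinuousLinearMap.smul_apply, ContinuousLinearMap.sum_apply,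
    ContinuousLinearMap.coe_comp', Function.comp_apply, PiLp.proj_apply,
    apply_ite (fun L : EuclideanSpace ℝ (Fin n) →L[ℝ] ℝ => L d),
    ContinuousLinearMap.zero_apply, smul_eq_mul, hBdef,
    ContinuousLinearMap.flip_apply, ContinuousLinearMap.comp_zero, zero_add,
    PiLp.inner_apply, RCLike.inner_apply, starRingEnd_apply, star_trivial, reflR,
    hsqrt]
  clear hF hinv hS hucoord hu hD2 hev2 hev hQc hsqrt hQval hQnn hQpos hsne hBdef
  simp only [PiLp.inner_apply, RCLike.inner_apply, starRingEnd_apply, star_trivial,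
    reflR] at horth
  have key : ∀ a b : Fin m → ℝ, (∑ i : Fin m, if (i : ℕ) = 0 then a i else b i)
      = a 0 + ∑ i ∈ Finset.univ.erase (0 : Fin m), b i := by
    intro a b
    rw [← Finset.add_sum_erase Finset.univ
      (fun i : Fin m => if (i : ℕ) = 0 then a i else b i) (Finset.mem_univ 0)]
    have h0 : (if ((0 : Fin m) : ℕ) = 0 then a 0 else b 0) = a 0 := by simp
    rw [h0]
    congr 1
    refine Finset.sum_congr rfl fun i hi => ?_
    rw [if_neg]
    have hi0 : i ≠ 0 := (Finset.mem_erase.mp hi).1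
    intro h
    exact hi0 (Fin.ext (by simp [h]))
  simp only [ite_mul, mul_ite, key] at horth ⊢
  set g : EuclideanSpace ℝ (Fin m) := G x0 with hg
  set u : EuclideanSpace ℝ (Fin m) := (fderiv ℝ G x0) d with huu
  set v : EuclideanSpace ℝ (Fin m) := ((fderiv ℝ (fderiv ℝ G) x0) d) d with hvv
  have e2 : (∑ i ∈ Finset.univ.erase (0 : Fin m), 2 * g i * u i)
      = 2 * ∑ i ∈ Finset.univ.erase (0 : Fin m), g i * u i := by
    rw [Finset.mul_sum]; exact Finset.sum_congr rfl fun i _ => by ring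
  have e3 : (∑ i ∈ Finset.univ.erase (0 : Fin m), (g i * v i + u i * u i))
      = (∑ i ∈ Finset.univ.erase (0 : Fin m), g i * v i)
        + ∑ i ∈ Finset.univ.erase (0 : Fin m), u i * u i := Finset.sum_add_distrib
  have e4 : (∑ i ∈ Finset.univ.erase (0 : Fin m), u i * -u i)
      = -∑ i ∈ Finset.univ.erase (0 : Fin m), u i * u i := by
    rw [← Finset.sum_neg_distrib]; exact Finset.sum_congr rfl fun i _ => by ring
  have e5 : (∑ i ∈ Finset.univ.erase (0 : Fin m), -g i * v i)
      = -∑ i ∈ Finset.univ.erase (0 : Fin m), g i * v i := by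
    rw [← Finset.sum_neg_distrib]; exact Finset.sum_congr rfl fun i _ => by ring
  have e6 : (∑ i ∈ Finset.univ.erase (0 : Fin m), -g i * u i)
      = -∑ i ∈ Finset.univ.erase (0 : Fin m), g i * u i := by
    rw [← Finset.sum_neg_distrib]; exact Finset.sum_congr rfl fun i _ => by ring
  rw [e6] at horth
  rw [e2, e3, e4, e5]
  have hP : (∑ i ∈ Finset.univ.erase (0 : Fin m), g i * u i) = u 0 * g 0 := by linarith
  rw [hP]
  have hg0' : g 0 ≠ 0 := hg0.ne'
  field_simp
  ring
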